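/- Let β > 1, 0 < ε < 1, M ≥ 1, n ≥ 1 with n·M ≥ 1. Let f^{(0)}, f^{(1)}, …, f^{(m)} ∈ ℝ^n be nonzero vectors with nonnegative coordinates, coordinatewise nondecreasing in t, and satisfying ‖f^{(0)}‖_1 ≥ 1, ‖f^{(0)}‖_β ≥ 1, and ‖f^{(m)}‖_1 ≤ n·M. Then every ε-flip chain in the sequence (g_β(f^{(0)}), …, g_β(f^{(m)})), where g_β(x) = (‖x‖_1/‖x‖_β)^{β/(β-1)} is the exponential of the β-Rényi entropy, has length at most 1 + 4β·ln(nM)/((β-1)·ε). -/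

import Mathlib

/-- The `L₁` norm of a vector. -/
noncomputable def l1Norm {n : ℕ} (x : Fin n → ℝ) : ℝ := ∑ i, |x i|

/-- The `L_β` norm of a vector (for real `β`), via real powers. -/
noncomputable def lpNorm {n : ℕ} (β : ℝ) (x : Fin n → ℝ) : ℝ :=
  (∑ i, |x i| ^ β) ^ (1 / β)

/-- The exponential of the `β`-Rényi entropy: `g_β(x) = (‖x‖₁ / ‖x‖_β)^{β/(β-1)}`. -/
noncomputable def renyiExp {n : ℕ} (β : ℝ) (x : Fin n → ℝ) : ℝ :=
  (l1Norm x / lpNorm β x) ^ (β / (β - 1))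

lemma l1Norm_pos {n : ℕ} {x : Fin n → ℝ} (hx : x ≠ 0) : 0 < l1Norm x := by
  obtain ⟨i, hi⟩ := Function.ne_iff.1 hx
  exact Finset.sum_pos' (fun j _ => abs_nonneg _) ⟨i, Finset.mem_univ i, abs_pos.2 hi⟩

lemma lpNorm_pos {n : ℕ} {β : ℝ} {x : Fin n → ℝ} (hx : x ≠ 0) :
    0 < lpNorm β x := by
  obtain ⟨i, hi⟩ := Function.ne_iff.1 hx
  have hsum : 0 < ∑ j, |x j| ^ β :=
    Finset.sum_pos' (fun j _ => Real.rpow_nonneg (abs_nonneg _) _)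
      ⟨i, Finset.mem_univ i, Real.rpow_pos_of_pos (abs_pos.2 hi) _⟩
  exact Real.rpow_pos_of_pos hsum _

lemma lpNorm_le_l1Norm {n : ℕ} {β : ℝ} (hβ : 1 < β) (x : Fin n → ℝ) :
    lpNorm β x ≤ l1Norm x := by
  have hβ0 : (0:ℝ) < β := by linarith
  set S := l1Norm x with hSdef
  have hS0 : 0 ≤ S := Finset.sum_nonneg fun i _ => abs_nonneg _
  have key : ∀ i : Fin n, |x i| ^ β ≤ S ^ (β - 1) * |x i| := by
    intro i
    rcases eq_or_lt_of_le (abs_nonneg (x i)) with h0 | hpos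
    · rw [← h0, Real.zero_rpow (ne_of_gt hβ0), mul_zero]
    · have hle : |x i| ≤ S := Finset.single_le_sum (fun j _ => abs_nonneg (x j)) (Finset.mem_univ i)
      calc |x i| ^ β = |x i| ^ (β - 1) * |x i| := by
            rw [← Real.rpow_add_one (ne_of_gt hpos)]; ring_nf
        _ ≤ S ^ (β - 1) * |x i| :=
            mul_le_mul_of_nonneg_right
              (Real.rpow_le_rpow (abs_nonneg _) hle (by linarith)) (abs_nonneg _)
  have hsum : ∑ i, |x i| ^ β ≤ S ^ β := by
    calc ∑ i, |x i| ^ β ≤ ∑ i, S ^ (β - 1) * |x i| := Finset.sum_le_sum fun i _ => key i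
      _ = S ^ (β - 1) * S := by rw [← Finset.mul_sum]; rfl
      _ ≤ S ^ β := by
          rcases eq_or_lt_of_le hS0 with h0 | hpos
          · rw [← h0, mul_zero]
            exact Real.rpow_nonneg le_rfl _
          · rw [← Real.rpow_add_one (ne_of_gt hpos)]; ring_nf; exact le_rfl
  calc lpNorm β x ≤ (S ^ β) ^ (1/β) :=
        Real.rpow_le_rpow (Finset.sum_nonneg fun i _ => Real.rpow_nonneg (abs_nonneg _) _)
          hsum (by positivity)
    _ = S := by
        rw [one_div, Real.rpow_rpow_inv hS0 (ne_of_gt hβ0)]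

lemma lpNorm_mono {n : ℕ} {β : ℝ} (hβ : 0 < β) {x y : Fin n → ℝ}
    (hx : ∀ i, 0 ≤ x i) (hxy : ∀ i, x i ≤ y i) : lpNorm β x ≤ lpNorm β y := by
  apply Real.rpow_le_rpow (Finset.sum_nonneg fun i _ => Real.rpow_nonneg (abs_nonneg _) _)
    (Finset.sum_le_sum fun i _ => Real.rpow_le_rpow (abs_nonneg _) (by
      rw [abs_of_nonneg (hx i), abs_of_nonneg ((hx i).trans (hxy i))]; exact hxy i)
      (le_of_lt hβ)) (by positivity)

lemma half_le_log_one_add {ε : ℝ} (h0 : 0 < ε) (h1 : ε ≤ 1) : ε / 2 ≤ Real.log (1 + ε) := by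
  rw [Real.le_log_iff_exp_le (by linarith)]
  have h2 : 1 - ε/2 ≤ Real.exp (-(ε/2)) := by
    have := Real.add_one_le_exp (-(ε/2)); linarith
  have h3 : (0:ℝ) < 1 - ε/2 := by linarith
  have h4 : Real.exp (ε/2) = (Real.exp (-(ε/2)))⁻¹ := by
    rw [← Real.exp_neg, neg_neg]
  rw [h4]
  have h5 : (Real.exp (-(ε/2)))⁻¹ ≤ (1 - ε/2)⁻¹ := inv_anti₀ h3 h2
  have h6 : (1 - ε/2)⁻¹ ≤ 1 + ε := by
    rw [inv_eq_one_div, div_le_iff₀ h3]; nlinarith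
  linarith

/-- Flip-number bound for the exponential Rényi entropy on insertion-only streams (proved inside
Proposition 6.2): for `β > 1`, if the nonzero, coordinatewise nondecreasing nonnegative vectors
`f^{(0)}, …, f^{(m)}` satisfy `‖f^{(0)}‖₁ ≥ 1`, `‖f^{(0)}‖_β ≥ 1` and `‖f^{(m)}‖₁ ≤ n·M`, then
every `ε`-flip chain in `t ↦ g_β(f^{(t)})` has length at most `1 + 4β·ln(nM)/((β-1)·ε)`. -/
theorem stmt_7 (n m : ℕ) (β ε M : ℝ) (f : ℕ → Fin n → ℝ)
    (hβ : 1 < β) (hε0 : 0 < ε) (hε1 : ε < 1) (hM : 1 ≤ M) (hn : 1 ≤ n)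
    (hnM : 1 ≤ (n : ℝ) * M)
    (hfne : ∀ t ≤ m, f t ≠ 0)
    (hfpos : ∀ t ≤ m, ∀ i, 0 ≤ f t i)
    (hfmono : ∀ s t, s ≤ t → t ≤ m → ∀ i, f s i ≤ f t i)
    (hl1 : 1 ≤ l1Norm (f 0))
    (hlβ : 1 ≤ lpNorm β (f 0))
    (hub : l1Norm (f m) ≤ (n : ℝ) * M) :
    ∀ l : List ℕ, l.Chain' (· < ·) → (∀ x ∈ l, x ≤ m) →
      l.Chain' (fun a b =>
        ¬((1 - ε) * renyiExp β (f b) ≤ renyiExp β (f a) ∧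
          renyiExp β (f a) ≤ (1 + ε) * renyiExp β (f b))) →
      (l.length : ℝ) ≤ 1 + 4 * β * Real.log ((n : ℝ) * M) / ((β - 1) * ε) := by
  have hβ0 : (0:ℝ) < β := by linarith
  have hβ1 : (0:ℝ) < β - 1 := by linarith
  set c : ℝ := β / (β - 1) with hcdef
  have hc : 0 < c := div_pos hβ0 hβ1
  set L : ℝ := Real.log ((n : ℝ) * M) with hLdef
  have hL0 : 0 ≤ L := Real.log_nonneg hnM
  set u : ℕ → ℝ := fun t => Real.log (l1Norm (f t)) with hudef
  set v : ℕ → ℝ := fun t => Real.log (lpNorm β (f t)) with hvdef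
  -- positivity of the norms
  have hl1pos : ∀ t ≤ m, 0 < l1Norm (f t) := fun t ht => l1Norm_pos (hfne t ht)
  have hlppos : ∀ t ≤ m, 0 < lpNorm β (f t) := fun t ht => lpNorm_pos (hfne t ht)
  -- monotonicity of u and v
  have humono : ∀ s t, s ≤ t → t ≤ m → u s ≤ u t := by
    intro s t hst htm
    apply Real.log_le_log (hl1pos s (hst.trans htm))
    apply Finset.sum_le_sum
    intro i _
    rw [abs_of_nonneg (hfpos s (hst.trans htm) i), abs_of_nonneg (hfpos t htm i)]
    exact hfmono s t hst htm i
  have hvmono : ∀ s t, s ≤ t → t ≤ m → v s ≤ v t := by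
    intro s t hst htm
    exact Real.log_le_log (hlppos s (hst.trans htm))
      (lpNorm_mono hβ0 (hfpos s (hst.trans htm)) (hfmono s t hst htm))
  -- bounds
  have hu0 : 0 ≤ u 0 := Real.log_nonneg hl1
  have hv0 : 0 ≤ v 0 := Real.log_nonneg hlβ
  have hum : u m ≤ L := Real.log_le_log (hl1pos m le_rfl) hub
  have hvm : v m ≤ L :=
    Real.log_le_log (hlppos m le_rfl) ((lpNorm_le_l1Norm hβ (f m)).trans hub)
  -- log of the Rényi exponential
  have hypos : ∀ t ≤ m, 0 < renyiExp β (f t) := by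
    intro t ht
    exact Real.rpow_pos_of_pos (div_pos (hl1pos t ht) (hlppos t ht)) _
  have hlog : ∀ t ≤ m, Real.log (renyiExp β (f t)) = c * (u t - v t) := by
    intro t ht
    rw [renyiExp, Real.log_rpow (div_pos (hl1pos t ht) (hlppos t ht)),
      Real.log_div (ne_of_gt (hl1pos t ht)) (ne_of_gt (hlppos t ht))]
  -- the gap from a single flip
  have gap : ∀ a b : ℕ, a ≤ b → b ≤ m →
      ¬((1 - ε) * renyiExp β (f b) ≤ renyiExp β (f a) ∧
          renyiExp β (f a) ≤ (1 + ε) * renyiExp β (f b)) →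
      Real.log (1 + ε) ≤ c * ((u b - u a) + (v b - v a)) := by
    intro a b hab hbm hflip
    have ham : a ≤ m := hab.trans hbm
    have hya := hypos a ham
    have hyb := hypos b hbm
    have hu : u a ≤ u b := humono a b hab hbm
    have hv : v a ≤ v b := hvmono a b hab hbm
    have hla := hlog a ham
    have hlb := hlog b hbm
    have hsum : Real.log (1 - ε) + Real.log (1 + ε) ≤ 0 := by
      rw [← Real.log_mul (by linarith) (by linarith)]
      apply Real.log_nonpos (by nlinarith) (by nlinarith)
    rcases not_and_or.1 hflip with h | h
    · -- renyiExp a < (1-ε) * renyiExp b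
      push_neg at h
      have hlt : Real.log (renyiExp β (f a)) <
          Real.log (1 - ε) + Real.log (renyiExp β (f b)) := by
        rw [← Real.log_mul (by linarith) (ne_of_gt hyb)]
        exact Real.log_lt_log hya h
      have : Real.log (1 + ε) ≤ c * ((u b - v b) - (u a - v a)) := by
        rw [hla, hlb] at hlt; linarith
      have h0 : 0 ≤ c * (v b - v a) := mul_nonneg (le_of_lt hc) (by linarith)
      have hid : c * ((u b - u a) + (v b - v a))
          = c * ((u b - v b) - (u a - v a)) + 2 * (c * (v b - v a)) := by ring
      linarith
    · -- (1+ε) * renyiExp b < renyiExp a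
      push_neg at h
      have hlt : Real.log (1 + ε) + Real.log (renyiExp β (f b)) <
          Real.log (renyiExp β (f a)) := by
        rw [← Real.log_mul (by linarith) (ne_of_gt hyb)]
        exact Real.log_lt_log (by positivity) h
      have : Real.log (1 + ε) ≤ c * ((u a - v a) - (u b - v b)) := by
        rw [hla, hlb] at hlt; linarith
      have h0 : 0 ≤ c * (u b - u a) := mul_nonneg (le_of_lt hc) (by linarith)
      have hid : c * ((u b - u a) + (v b - v a))
          = c * ((u a - v a) - (u b - v b)) + 2 * (c * (u b - u a)) := by ring
      linarith
  -- telescoping along the chain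
  have aux : ∀ (rest : List ℕ) (a : ℕ),
      List.Chain' (· < ·) (a :: rest) → (∀ x ∈ a :: rest, x ≤ m) →
      List.Chain' (fun a b =>
        ¬((1 - ε) * renyiExp β (f b) ≤ renyiExp β (f a) ∧
          renyiExp β (f a) ≤ (1 + ε) * renyiExp β (f b))) (a :: rest) →
      (rest.length : ℝ) * Real.log (1 + ε) ≤ c * ((u m - u a) + (v m - v a)) := by
    intro rest
    induction rest with
    | nil =>
        intro a _ hmem _
        have ham : a ≤ m := hmem a (List.mem_cons_self)
        have h1 : u a ≤ u m := humono a m ham le_rfl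
        have h2 : v a ≤ v m := hvmono a m ham le_rfl
        simp only [List.length_nil, Nat.cast_zero, zero_mul]
        exact mul_nonneg (le_of_lt hc) (by linarith)
    | cons b rest' ih =>
        intro a hchain hmem hflip
        have ham : a ≤ m := hmem a (List.mem_cons_self)
        have hbm : b ≤ m := hmem b (by simp)
        have hab : a < b := (List.isChain_cons_cons.1 hchain).1
        have hgap := gap a b (le_of_lt hab) hbm (List.isChain_cons_cons.1 hflip).1
        have hih := ih b (List.isChain_cons_cons.1 hchain).2
          (fun x hx => hmem x (List.mem_cons_of_mem a hx)) (List.isChain_cons_cons.1 hflip).2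
        have key : c * ((u b - u a) + (v b - v a)) + c * ((u m - u b) + (v m - v b))
            = c * ((u m - u a) + (v m - v a)) := by ring
        have hlen : ((b :: rest').length : ℝ) = (rest'.length : ℝ) + 1 := by
          simp [List.length_cons]
        rw [hlen, add_mul, one_mul]
        linarith
  -- conclusion
  intro l hchain hmem hflip
  rcases l with _ | ⟨a, rest⟩
  · simp only [List.length_nil, Nat.cast_zero]
    have : 0 ≤ 4 * β * L / ((β - 1) * ε) := by positivity
    linarith
  · have key := aux rest a hchain hmem hflip
    have ham : a ≤ m := hmem a (List.mem_cons_self)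
    have h1 : 0 ≤ u a := le_trans hu0 (humono 0 a (Nat.zero_le a) ham)
    have h2 : 0 ≤ v a := le_trans hv0 (hvmono 0 a (Nat.zero_le a) ham)
    have hbound : (rest.length : ℝ) * Real.log (1 + ε) ≤ 2 * c * L := by
      have h3 : c * ((u m - u a) + (v m - v a)) ≤ c * (2 * L) :=
        mul_le_mul_of_nonneg_left (by linarith [hum, hvm]) (le_of_lt hc)
      have h4 : c * (2 * L) = 2 * c * L := by ring
      linarith
    have hhalf : ε / 2 ≤ Real.log (1 + ε) := half_le_log_one_add hε0 (le_of_lt hε1)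
    have hlen0 : (0:ℝ) ≤ (rest.length : ℝ) := Nat.cast_nonneg _
    have hstep : (rest.length : ℝ) * (ε / 2) ≤ 2 * c * L :=
      le_trans (mul_le_mul_of_nonneg_left hhalf hlen0) hbound
    have hfin : (rest.length : ℝ) ≤ 4 * β * L / ((β - 1) * ε) := by
      rw [le_div_iff₀ (by positivity)]
      have hcval : c * (β - 1) = β := by
        rw [hcdef]; field_simp
      have h7 := mul_le_mul_of_nonneg_right hstep (by linarith : (0:ℝ) ≤ 2 * (β - 1))
      have hid1 : (rest.length : ℝ) * (ε/2) * (2 * (β - 1))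
          = (rest.length : ℝ) * ((β - 1) * ε) := by ring
      have hid3 : 2 * c * L * (2 * (β - 1)) = 4 * β * L := by
        rw [show 2 * c * L * (2 * (β - 1)) = 4 * L * (c * (β - 1)) by ring, hcval]; ring
      linarith
    have hlen : ((a :: rest).length : ℝ) = (rest.length : ℝ) + 1 := by
      simp [List.length_cons]
    rw [hlen]
    linarith
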